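/- Let B be a ring, M a finitely generated projective right B-module, and N a left B-module. Let Ann_B(N) := {b ∈ B : b·n = 0 for all n ∈ N}, a two-sided ideal of B, and let M·Ann_B(N) ⊆ M denote the additive subgroup generated by all elements m·b with m ∈ M and b ∈ Ann_B(N). Then for x ∈ M, one has x ⊗ y = 0 in M ⊗_B N for all y ∈ N if and only if x ∈ M·Ann_B(N). -/

import Mathlib

open MulOpposite
open scoped TensorProduct

universe u

/-- The subgroup of balancing relations defining `M ⊗[B] N` as a quotient of the
`ℤ`-tensor product `M ⊗[ℤ] N`; an element `x ⊗ₜ y` vanishes in `M ⊗[B] N` if and only if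
it lies in this subgroup. -/
noncomputable def balancedRel (B M N : Type u) [Ring B] [AddCommGroup M] [AddCommGroup N]
    [Module Bᵐᵒᵖ M] [Module B N] : AddSubgroup (M ⊗[ℤ] N) :=
  AddSubgroup.closure {x : M ⊗[ℤ] N |
    ∃ (b : B) (m : M) (n : N), x = (op b • m) ⊗ₜ[ℤ] n - m ⊗ₜ[ℤ] (b • n)}

section Aux

variable (B M N : Type u) [Ring B] [AddCommGroup M] [AddCommGroup N]
    [Module Bᵐᵒᵖ M] [Module B N]

/-- Auxiliary map: given a right-module functional `f : M →ₗ[Bᵐᵒᵖ] Bᵐᵒᵖ`, the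
`ℤ`-linear map `M ⊗[ℤ] N → N`, `m ⊗ n ↦ (f m).unop • n`. -/
noncomputable def auxPhi (f : M →ₗ[Bᵐᵒᵖ] Bᵐᵒᵖ) : M ⊗[ℤ] N →ₗ[ℤ] N :=
  TensorProduct.lift (LinearMap.mk₂ ℤ (fun m n => (f m).unop • n)
    (fun m m' n => by simp [map_add, add_smul])
    (fun c m n => by
      simp only [map_zsmul, unop_smul, smul_assoc])
    (fun m n n' => smul_add _ _ _)
    (fun c m n => smul_comm _ _ _))

lemma auxPhi_tmul (f : M →ₗ[Bᵐᵒᵖ] Bᵐᵒᵖ) (m : M) (n : N) :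
    auxPhi B M N f (m ⊗ₜ[ℤ] n) = (f m).unop • n := rfl

lemma auxPhi_vanish (f : M →ₗ[Bᵐᵒᵖ] Bᵐᵒᵖ) {z : M ⊗[ℤ] N} (hz : z ∈ balancedRel B M N) :
    auxPhi B M N f z = 0 := by
  induction hz using AddSubgroup.closure_induction with
  | mem w hw =>
      obtain ⟨b, m, n, rfl⟩ := hw
      have h1 : f (op b • m) = op b * f m := by rw [map_smul, smul_eq_mul]
      simp only [map_sub, auxPhi_tmul, h1,
        unop_mul, unop_op, mul_smul, sub_self]
  | zero => simp
  | add _ _ _ _ h1 h2 => simp [map_add, h1, h2]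
  | neg _ _ h1 => simp [h1]

end Aux

/-- Let `B` be a ring, `M` a finitely generated projective right
`B`-module and `N` a left `B`-module.  Then for `x ∈ M`, one has `x ⊗ y = 0` in
`M ⊗[B] N` for all `y ∈ N` if and only if `x ∈ M · Ann_B(N)`, the additive subgroup
generated by the elements `m · b` with `b` annihilating `N`. -/
theorem tensor_vanishing_iff_mem_smul_annihilator
    (B M N : Type u) [Ring B] [AddCommGroup M] [AddCommGroup N]
    [Module Bᵐᵒᵖ M] [Module B N]
    [Module.Finite Bᵐᵒᵖ M] [Module.Projective Bᵐᵒᵖ M]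
    (x : M) :
    (∀ y : N, (x ⊗ₜ[ℤ] y : M ⊗[ℤ] N) ∈ balancedRel B M N) ↔
      x ∈ AddSubgroup.closure
        {z : M | ∃ (m : M) (b : B), (∀ n : N, b • n = 0) ∧ z = op b • m} := by
  constructor
  · intro h
    obtain ⟨n, π, hπ⟩ := Module.Finite.exists_fin' Bᵐᵒᵖ M
    obtain ⟨s, hs⟩ := Module.projective_lifting_property π (LinearMap.id) hπ
    -- x = ∑ i, π (Pi.single i (s x i))
    have hx : x = ∑ i : Fin n, π (Pi.single i (s x i)) := by
      rw [← map_sum]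
      have : (∑ i : Fin n, Pi.single i (s x i)) = s x := by
        ext j; simp [Finset.sum_apply, Pi.single_apply]
      rw [this]
      have := congrArg (fun g => g x) hs
      simpa using this.symm
    rw [hx]
    apply AddSubgroup.sum_mem
    intro i _
    apply AddSubgroup.subset_closure
    refine ⟨π (Pi.single i 1), (s x i).unop, ?_, ?_⟩
    · intro y
      have hmem := h y
      have := auxPhi_vanish B M N ((LinearMap.proj i) ∘ₗ s) hmem
      simpa [auxPhi_tmul] using this
    · have h1 : Pi.single i (s x i) = (s x i) • (Pi.single i (1 : Bᵐᵒᵖ) : Fin n → Bᵐᵒᵖ) := by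
        ext j
        rcases eq_or_ne j i with rfl | hji
        · simp
        · simp [Pi.single_apply, hji]
      rw [h1, map_smul, op_unop]
  · intro hx y
    induction hx using AddSubgroup.closure_induction with
    | mem z hz =>
        obtain ⟨m, b, hb, rfl⟩ := hz
        have : (op b • m) ⊗ₜ[ℤ] y =
            (op b • m) ⊗ₜ[ℤ] y - m ⊗ₜ[ℤ] (b • y) := by
          rw [hb y, TensorProduct.tmul_zero, sub_zero]
        rw [this]
        exact AddSubgroup.subset_closure ⟨b, m, y, rfl⟩
    | zero => simp only [TensorProduct.zero_tmul]; exact zero_mem _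
    | add a b _ _ ha hb =>
        rw [TensorProduct.add_tmul]; exact AddSubgroup.add_mem _ ha hb
    | neg a _ ha =>
        rw [TensorProduct.neg_tmul]; exact AddSubgroup.neg_mem _ ha
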